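/- For all positive integers s > 1 and t, A(s-1,t) ≤ t·C(s,t) < A(s,t+1). -/

import Mathlib

/-- The Ackermann function of the paper, defined for positive integers `s, t`:
`A(1,t) = 2t`, `A(s,1) = 2`, and `A(s,t) = A(s-1, A(s,t-1))` for `s, t > 1`.
(The value at arguments equal to `0` is junk.) -/
def A : ℕ → ℕ → ℕ
  | 0, _ => 0
  | 1, t => 2 * t
  | _+2, 0 => 0
  | _+2, 1 => 2
  | s+2, t+2 => A (s+1) (A (s+2) (t+1))
termination_by s t => (s, t)

/-- The function `C` of Füredi and Hajnal, defined for positive integers `s, t`: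
`C(1,t) = 1`, `C(s,1) = 2` for `s > 1`, and `C(s,t) = C(s,t-1) * C(s-1, C(s,t-1))` for `s, t > 1`.
(The value at arguments equal to `0` is junk.) -/
def C : ℕ → ℕ → ℕ
  | 0, _ => 0
  | 1, _ => 1
  | _+2, 0 => 0
  | _+2, 1 => 2
  | s+2, t+2 => C (s+2) (t+1) * C (s+1) (C (s+2) (t+1))
termination_by s t => (s, t)

lemma A_one (t : ℕ) : A 1 t = 2 * t := by simp [A]
lemma A_base (s : ℕ) : A (s+2) 1 = 2 := by simp [A]
lemma A_step (s t : ℕ) : A (s+2) (t+2) = A (s+1) (A (s+2) (t+1)) := by rw [A]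
lemma C_one (t : ℕ) : C 1 t = 1 := by simp [C]
lemma C_base (s : ℕ) : C (s+2) 1 = 2 := by simp [C]
lemma C_step (s t : ℕ) : C (s+2) (t+2) = C (s+2) (t+1) * C (s+1) (C (s+2) (t+1)) := by rw [C]

lemma A_s_one (s : ℕ) : A (s+1) 1 = 2 := by
  cases s with
  | zero => simp [A_one]
  | succ s => exact A_base s

lemma C_pos : ∀ s t : ℕ, 1 ≤ C (s+1) (t+1) := by
  intro s
  induction s with
  | zero => intro t; simp [C_one]
  | succ s ih =>
    intro t
    induction t with
    | zero => simp [C_base]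
    | succ t iht =>
      rw [C_step]
      obtain ⟨c, hc'⟩ : ∃ c, C (s+1+1) (t+1) = c + 1 := ⟨C (s+1+1) (t+1) - 1, by omega⟩
      have h1 : 1 ≤ C (s+1) (C (s+1+1) (t+1)) := by
        rw [hc']; exact ih c
      have h0 : 0 < C (s+1+1) (t+1) := by omega
      exact Nat.mul_pos h0 h1

lemma C_two_le : ∀ s t : ℕ, 2 ≤ C (s+2) (t+1) := by
  intro s t
  induction t with
  | zero => simp [C_base]
  | succ t iht =>
    rw [C_step]
    have h1 : 1 ≤ C (s+1) (C (s+2) (t+1)) := by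
      obtain ⟨c, hc⟩ : ∃ c, C (s+2) (t+1) = c + 1 := ⟨C (s+2) (t+1) - 1, by omega⟩
      rw [hc]; exact C_pos s c
    calc 2 ≤ C (s+2) (t+1) * 1 := by simpa using iht
    _ ≤ _ := Nat.mul_le_mul_left _ h1

lemma A_ge_two_mul : ∀ s t : ℕ, 2 * (t+1) ≤ A (s+1) (t+1) := by
  intro s
  induction s with
  | zero => intro t; simp [A_one]
  | succ s ih =>
    intro t
    induction t with
    | zero => simp [A_s_one]
    | succ t iht =>
      rw [A_step]
      have h1 : 2 * (t+1) ≤ A (s+2) (t+1) := iht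
      obtain ⟨a', ha'⟩ : ∃ a', A (s+2) (t+1) = a' + 1 := ⟨A (s+2) (t+1) - 1, by omega⟩
      have h3 : 2 * A (s+2) (t+1) ≤ A (s+1) (A (s+2) (t+1)) := by
        rw [ha']; exact ih a'
      omega

lemma A_pos (s t : ℕ) : 1 ≤ A (s+1) (t+1) := le_trans (by omega) (A_ge_two_mul s t)

lemma A_double (s t : ℕ) : 2 * A (s+2) (t+1) ≤ A (s+2) (t+2) := by
  rw [A_step]
  have hpos : 1 ≤ A (s+2) (t+1) := A_pos (s+1) t
  obtain ⟨a', ha'⟩ : ∃ a', A (s+2) (t+1) = a' + 1 := ⟨A (s+2) (t+1) - 1, by omega⟩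
  rw [ha']
  exact A_ge_two_mul s a'

lemma A_mono (s : ℕ) {t1 t2 : ℕ} (h1 : 1 ≤ t1) (h : t1 ≤ t2) : A (s+1) t1 ≤ A (s+1) t2 := by
  cases s with
  | zero => rw [A_one, A_one]; omega
  | succ s =>
    induction t2, h using Nat.le_induction with
    | base => exact le_rfl
    | succ t2 ht2 ih =>
      have h2 : 1 ≤ t2 := le_trans h1 ht2
      obtain ⟨t', ht'⟩ : ∃ t', t2 = t' + 1 := ⟨t2 - 1, by omega⟩
      calc A (s+2) t1 ≤ A (s+2) t2 := ih
      _ ≤ 2 * A (s+2) t2 := by omega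
      _ ≤ A (s+2) (t2+1) := by rw [ht']; exact A_double s t'

lemma A_shift (s t : ℕ) : ∀ k : ℕ, 2^k * A (s+2) (t+1) ≤ A (s+2) (t+k+1) := by
  intro k
  induction k with
  | zero => simp
  | succ k ih =>
    have hd := A_double s (t+k)
    calc 2^(k+1) * A (s+2) (t+1) = 2 * (2^k * A (s+2) (t+1)) := by ring
    _ ≤ 2 * A (s+2) (t+k+1) := by omega
    _ ≤ A (s+2) (t+k+2) := hd
    _ = A (s+2) (t+(k+1)+1) := rfl

lemma A_s_two : ∀ s : ℕ, A (s+1) 2 = 4 := by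
  intro s
  induction s with
  | zero => simp [A_one]
  | succ s ih =>
    have h : A (s+2) 2 = A (s+1) (A (s+2) 1) := A_step s 0
    rw [h, A_base, ih]

lemma C_two (t : ℕ) : C 2 (t+1) = 2 := by
  induction t with
  | zero => exact C_base 0
  | succ t ih =>
    have h : C 2 (t+2) = C 2 (t+1) * C 1 (C 2 (t+1)) := C_step 0 t
    rw [h, ih, C_one]

lemma A_two (t : ℕ) : A 2 (t+1) = 2^(t+1) := by
  induction t with
  | zero => simpa using A_s_one 1
  | succ t ih =>
    have h : A 2 (t+2) = A 1 (A 2 (t+1)) := A_step 0 t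
    rw [h, A_one, ih]; ring

/-- Key lemma 1: `A(s,t) ≤ C(s+1,t)` for `s ≥ 2, t ≥ 1`. -/
lemma A_le_C : ∀ s t : ℕ, A (s+2) (t+1) ≤ C (s+3) (t+1) := by
  intro s
  induction s with
  | zero =>
    intro t
    simp only [Nat.zero_add]
    induction t with
    | zero => rw [A_base, C_base]
    | succ t iht =>
      have hA : A 2 (t+2) = 2 * A 2 (t+1) := by rw [A_step 0 t, A_one]
      have hc2 : 2 ≤ C 3 (t+1) := C_two_le 1 t
      obtain ⟨c, hc⟩ : ∃ c, C 3 (t+1) = c + 1 := ⟨C 3 (t+1) - 1, by omega⟩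
      have hC : C 3 (t+2) = C 3 (t+1) * 2 := by
        rw [C_step 1 t, hc, C_two]
      rw [hA, hC]
      omega
  | succ s ih =>
    intro t
    induction t with
    | zero => rw [A_base, C_base]
    | succ t iht =>
      rw [A_step, C_step]
      set a := A (s+3) (t+1) with ha
      set c := C (s+4) (t+1) with hcdef
      have hac : a ≤ c := iht
      have hapos : 1 ≤ a := A_pos (s+2) t
      have hcpos : 2 ≤ c := C_two_le (s+2) t
      obtain ⟨c', hc'⟩ : ∃ c', c = c' + 1 := ⟨c - 1, by omega⟩
      have h1 : A (s+2) a ≤ A (s+2) c := A_mono (s+1) hapos hac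
      have h2 : A (s+2) c ≤ C (s+3) c := by rw [hc']; exact ih c'
      have h3 : 1 ≤ C (s+3) c := by rw [hc']; exact C_pos (s+2) c'
      calc A (s+2) a ≤ C (s+3) c := le_trans h1 h2
      _ ≤ c * C (s+3) c := Nat.le_mul_of_pos_left _ (by omega)

lemma two_mul_le_two_pow : ∀ c : ℕ, 2 * (c+2) ≤ 2^(c+2) := by
  intro c
  induction c with
  | zero => norm_num
  | succ c ih =>
    have h : (2:ℕ)^(c+1+2) = 2 * 2^(c+2) := by ring
    omega

/-- Key lemma 2: `2^t * C(s,t) ≤ A(s,t+1)` for `s ≥ 2, t ≥ 1`. -/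
lemma pow_mul_C_le_A : ∀ s t : ℕ, 2^(t+1) * C (s+2) (t+1) ≤ A (s+2) (t+2) := by
  intro s
  induction s with
  | zero =>
    intro t
    simp only [Nat.zero_add]
    rw [C_two, A_two]
    have h : (2:ℕ)^(t+2) = 2^(t+1) * 2 := by ring
    omega
  | succ s ih =>
    intro t
    induction t with
    | zero =>
      rw [C_base, A_s_two]
      norm_num
    | succ t iht =>
      set c := C (s+3) (t+1) with hcdef
      have hc2 : 2 ≤ c := C_two_le (s+1) t
      obtain ⟨c', hc'⟩ : ∃ c', c = c' + 2 := ⟨c - 2, by omega⟩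
      have hCs : C (s+3) (t+2) = c * C (s+2) c := C_step (s+1) t
      have hAs : A (s+3) (t+3) = A (s+2) (A (s+3) (t+2)) := A_step (s+1) (t+1)
      have houter : 2^c * C (s+2) c ≤ A (s+2) (c+1) := by
        have h := ih (c-1)
        have hc1 : c - 1 + 1 = c := by omega
        have hc2' : c - 1 + 2 = c + 1 := by omega
        rwa [hc1, hc2'] at h
      have h2c : 2 * c ≤ 2^c := by
        rw [hc']; exact two_mul_le_two_pow c'
      have hinner : 2^(t+1) * c ≤ A (s+3) (t+2) := iht
      have hp : t + 2 ≤ 2^(t+1) := by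
        have := Nat.lt_two_pow_self (n := t+1)
        omega
      have hbig : c + (t+1) + 1 ≤ A (s+3) (t+2) := by
        have h4 : c + (t+1) + 1 ≤ 2^(t+1) * c := by
          calc c + (t+1) + 1 ≤ c + 2 * (t+1) := by omega
          _ ≤ c + (t+1) * c := by
            have h5 : 2 * (t+1) ≤ (t+1) * c := by
              calc 2 * (t+1) = (t+1) * 2 := by ring
              _ ≤ (t+1) * c := Nat.mul_le_mul_left _ hc2
            omega
          _ = (t+2) * c := by ring
          _ ≤ 2^(t+1) * c := Nat.mul_le_mul_right _ hp
        omega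
      calc 2^(t+2) * C (s+3) (t+2) = 2^(t+2) * (c * C (s+2) c) := by rw [hCs]
      _ = 2^(t+1) * ((2 * c) * C (s+2) c) := by ring
      _ ≤ 2^(t+1) * (2^c * C (s+2) c) :=
          Nat.mul_le_mul_left _ (Nat.mul_le_mul_right _ h2c)
      _ ≤ 2^(t+1) * A (s+2) (c+1) := Nat.mul_le_mul_left _ houter
      _ ≤ A (s+2) (c+(t+1)+1) := A_shift s c (t+1)
      _ ≤ A (s+2) (A (s+3) (t+2)) := A_mono (s+1) (by omega) hbig
      _ = A (s+3) (t+3) := hAs.symm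

/-- Lemma (inverse-ackermann): for all positive integers `s > 1` and `t`,
`A(s-1,t) ≤ t * C(s,t) < A(s,t+1)`. -/
theorem ackermann_le_mul_C_lt (s t : ℕ) (hs : 1 < s) (ht : 0 < t) :
    A (s - 1) t ≤ t * C s t ∧ t * C s t < A s (t + 1) := by
  obtain ⟨s', rfl⟩ : ∃ s', s = s' + 2 := ⟨s - 2, by omega⟩
  obtain ⟨t', rfl⟩ : ∃ t', t = t' + 1 := ⟨t - 1, by omega⟩
  constructor
  · -- lower bound
    cases s' with
    | zero =>
      simp only [Nat.zero_add, show (2:ℕ) - 1 = 1 from rfl]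
      rw [A_one, C_two]
      omega
    | succ s'' =>
      have h1 : A (s''+2) (t'+1) ≤ C (s''+3) (t'+1) := A_le_C s'' t'
      have h2 : 1 ≤ C (s''+3) (t'+1) := C_pos (s''+2) t'
      have he : s'' + 1 + 2 - 1 = s'' + 2 := by omega
      rw [he]
      calc A (s''+2) (t'+1) ≤ C (s''+3) (t'+1) := h1
      _ ≤ (t'+1) * C (s''+3) (t'+1) := Nat.le_mul_of_pos_left _ (by omega)
  · -- upper bound
    have hq : 2^(t'+1) * C (s'+2) (t'+1) ≤ A (s'+2) (t'+1+1) := pow_mul_C_le_A s' t'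
    have hcpos : 1 ≤ C (s'+2) (t'+1) := C_pos (s'+1) t'
    have hp : t' + 1 < 2^(t'+1) := Nat.lt_two_pow_self (n := t'+1)
    have h1 : (t'+1) * C (s'+2) (t'+1) < 2^(t'+1) * C (s'+2) (t'+1) :=
      mul_lt_mul_of_pos_right hp (by omega)
    exact lt_of_lt_of_le h1 hq
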